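/- Let (X,Y) be a binary source pair, N = 2^n, (X^N, Y^N) be N i.i.d. copies, U^N = X^N G_N, and let E ⊆ {1,…,N}. Consider the successive-cancellation decoder that is given (U_i)_{i∈E} and Y^N, and for i ∉ E estimates U_i by the maximum-likelihood rule based on (Y^N, Û^{i−1}). Then the block error probability satisfies Pr(Û^N ≠ U^N) ≤ Σ_{i∉E} Z(U_i | Y^N, U^{i−1}). -/

import Mathlib

open Matrix

/-- The kernel `F₂ = [[1,0],[1,1]]` over GF(2). -/
def F2kernel : Matrix (Fin 2) (Fin 2) (ZMod 2) := !![1, 0; 1, 1]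

/-- `n`-th Kronecker power of `F₂`, indexed by bit strings. -/
def kronPow (n : ℕ) : Matrix (Fin n → Fin 2) (Fin n → Fin 2) (ZMod 2) :=
  Matrix.of fun i j => ∏ k : Fin n, F2kernel (i k) (j k)

/-- Bit-reversal permutation matrix `B_N`. -/
def bitRev (n : ℕ) : Matrix (Fin n → Fin 2) (Fin n → Fin 2) (ZMod 2) :=
  Matrix.of fun i j => if i = j ∘ Fin.rev then 1 else 0

/-- The polar transform `G_N = F₂^{⊗n} B_N`; it satisfies `G_N⁻¹ = G_N`. -/
def polarG (n : ℕ) : Matrix (Fin n → Fin 2) (Fin n → Fin 2) (ZMod 2) :=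
  kronPow n * bitRev n

/-- The natural (MSB-first) numbering of the index set `{1,…,N}`,
`N = 2^n`, by bit strings. -/
def ord {n : ℕ} (i : Fin n → Fin 2) : ℕ :=
  ∑ k : Fin n, (i k).val * 2 ^ (n - 1 - k.val)

/-- Joint pmf of `(U^N, Y^N)` where `(X^N, Y^N)` are `N` i.i.d. copies of the
source `p` and `U^N = X^N G_N` (equivalently `X^N = U^N G_N`). -/
noncomputable def pU {n : ℕ} (p : ZMod 2 → ℕ → ℝ)
    (u : (Fin n → Fin 2) → ZMod 2) (y : (Fin n → Fin 2) → ℕ) : ℝ :=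
  ∏ i : Fin n → Fin 2, p (Matrix.vecMul u (polarG n) i) (y i)

/-- Unnormalized probability `Pr(U_i = a, U^{i-1} = v^{i-1}, Y^N = y)`. -/
noncomputable def jointRestr {n : ℕ} (p : ZMod 2 → ℕ → ℝ)
    (y : (Fin n → Fin 2) → ℕ) (i : Fin n → Fin 2)
    (v : (Fin n → Fin 2) → ZMod 2) (a : ZMod 2) : ℝ :=
  ∑ u : (Fin n → Fin 2) → ZMod 2,
    if u i = a ∧ ∀ j, ord j < ord i → u j = v j then pU p u y else 0

/-- The successive-cancellation decoder: given `y` and the bits `u_i`, `i ∈ E`,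
it reproduces `u_i` for `i ∈ E` and otherwise takes a maximum-likelihood
decision for `U_i` given `Y^N = y` and the previous estimates. -/
noncomputable def dec {n : ℕ} (p : ZMod 2 → ℕ → ℝ) (E : Finset (Fin n → Fin 2))
    (y : (Fin n → Fin 2) → ℕ) (u : (Fin n → Fin 2) → ZMod 2) :
    (Fin n → Fin 2) → ZMod 2 := fun i =>
  if i ∈ E then u i
  else
    if jointRestr p y i (fun j => if h : ord j < ord i then dec p E y u j else 0) 1 ≤
        jointRestr p y i (fun j => if h : ord j < ord i then dec p E y u j else 0) 0
    then 0 else 1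
termination_by i => ord i
decreasing_by all_goals exact h

/-- Conditional Bhattacharyya parameter `Z(U_i | Y^N, U^{i-1})`. -/
noncomputable def Zi {n : ℕ} (p : ZMod 2 → ℕ → ℝ) (i : Fin n → Fin 2) : ℝ :=
  2 * ∑' w : ((Fin n → Fin 2) → ℕ) × ({j : Fin n → Fin 2 // ord j < ord i} → ZMod 2),
    Real.sqrt
      ((∑ u : (Fin n → Fin 2) → ZMod 2,
        if u i = 0 ∧ ∀ j : {j // ord j < ord i}, u j.1 = w.2 j then pU p u w.1 else 0) *
       (∑ u : (Fin n → Fin 2) → ZMod 2,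
        if u i = 1 ∧ ∀ j : {j // ord j < ord i}, u j.1 = w.2 j then pU p u w.1 else 0))

section aux
variable {n : ℕ} {p : ZMod 2 → ℕ → ℝ}

lemma pU_nonneg (hp : ∀ x y, 0 ≤ p x y) (u : (Fin n → Fin 2) → ZMod 2)
    (y : (Fin n → Fin 2) → ℕ) : 0 ≤ pU p u y :=
  Finset.prod_nonneg fun _ _ => hp _ _

/-- marginal of p over the first coordinate -/
noncomputable def qf (p : ZMod 2 → ℕ → ℝ) (b : ℕ) : ℝ := ∑ a : ZMod 2, p a b

lemma qf_nonneg (hp : ∀ x y, 0 ≤ p x y) (b : ℕ) : 0 ≤ qf p b :=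
  Finset.sum_nonneg fun _ _ => hp _ _

lemma le_qf (hp : ∀ x y, 0 ≤ p x y) (a : ZMod 2) (b : ℕ) : p a b ≤ qf p b :=
  Finset.single_le_sum (fun x _ => hp x b) (Finset.mem_univ a)

lemma summable_qf (hp : ∀ x y, 0 ≤ p x y)
    (hsum : HasSum (fun z : ZMod 2 × ℕ => p z.1 z.2) 1) : Summable (qf p) := by
  have h1 : Summable fun z : ℕ × ZMod 2 => p z.2 z.1 := hsum.summable.prod_symm
  have h2 := (summable_prod_of_nonneg (f := fun z : ℕ × ZMod 2 => p z.2 z.1)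
    (fun z => hp _ _)).1 h1
  have := h2.2
  simp only [tsum_fintype] at this
  exact this

/-- i.i.d. product of the marginal -/
noncomputable def Qf (p : ZMod 2 → ℕ → ℝ) (y : (Fin n → Fin 2) → ℕ) : ℝ :=
  ∏ i : Fin n → Fin 2, qf p (y i)

lemma Qf_nonneg (hp : ∀ x y, 0 ≤ p x y) (y : (Fin n → Fin 2) → ℕ) : 0 ≤ Qf p y :=
  Finset.prod_nonneg fun _ _ => qf_nonneg hp _

lemma pU_le_Qf (hp : ∀ x y, 0 ≤ p x y) (u : (Fin n → Fin 2) → ZMod 2)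
    (y : (Fin n → Fin 2) → ℕ) : pU p u y ≤ Qf p y :=
  Finset.prod_le_prod (fun _ _ => hp _ _) (fun i _ => le_qf hp _ _)

lemma summable_pi_prod_fin {q : ℕ → ℝ} (h0 : ∀ b, 0 ≤ q b) (hs : Summable q) :
    ∀ m : ℕ, Summable fun y : Fin m → ℕ => ∏ i, q (y i) := by
  intro m
  induction m with
  | zero => exact Summable.of_finite
  | succ m ih =>
    have h2 : Summable fun x : ℕ × (Fin m → ℕ) => q x.1 * ∏ i, q (x.2 i) := by
      apply Summable.mul_of_nonneg hs ih h0
      intro y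
      exact Finset.prod_nonneg fun _ _ => h0 _
    have heq : (fun y : Fin (m + 1) → ℕ => ∏ i, q (y i))
        = (fun x : ℕ × (Fin m → ℕ) => q x.1 * ∏ i, q (x.2 i)) ∘ (Fin.consEquiv fun _ => ℕ).symm := by
      funext y
      simp only [Function.comp_apply, Fin.consEquiv, Equiv.coe_fn_symm_mk, Fin.prod_univ_succ]
      rfl
    rw [heq]
    exact (Fin.consEquiv fun _ => ℕ).symm.summable_iff.mpr h2

lemma summable_pi_prod {ι : Type*} [Fintype ι] {q : ℕ → ℝ} (h0 : ∀ b, 0 ≤ q b)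
    (hs : Summable q) : Summable fun y : ι → ℕ => ∏ i, q (y i) := by
  have e : ι ≃ Fin (Fintype.card ι) := Fintype.equivFin ι
  have h := summable_pi_prod_fin h0 hs (Fintype.card ι)
  have heq : (fun y : ι → ℕ => ∏ i, q (y i))
      = (fun y : Fin (Fintype.card ι) → ℕ => ∏ i, q (y i))
        ∘ (Equiv.arrowCongr e (Equiv.refl ℕ)) := by
    funext y
    simp only [Function.comp_apply, Equiv.arrowCongr_apply, Equiv.coe_refl,
      Function.comp, id_eq]
    exact (Equiv.prod_comp e.symm fun j => q (y j)).symm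
  rw [heq]
  exact (Equiv.arrowCongr e (Equiv.refl ℕ)).summable_iff.mpr h

lemma summable_Qf (hp : ∀ x y, 0 ≤ p x y)
    (hsum : HasSum (fun z : ZMod 2 × ℕ => p z.1 z.2) 1) :
    Summable (Qf p (n := n)) :=
  summable_pi_prod (qf_nonneg hp) (summable_qf hp hsum)

end aux

section aux2
variable {n : ℕ} {p : ZMod 2 → ℕ → ℝ}

lemma ite_pU_nonneg (hp : ∀ x y, 0 ≤ p x y) {c : Prop} [Decidable c]
    (u : (Fin n → Fin 2) → ZMod 2) (y : (Fin n → Fin 2) → ℕ) :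
    0 ≤ if c then pU p u y else 0 := by
  split
  · exact pU_nonneg hp u y
  · exact le_refl 0

lemma sum_ite_le_card_Qf (hp : ∀ x y, 0 ≤ p x y)
    {c : ((Fin n → Fin 2) → ZMod 2) → Prop} [DecidablePred c] (y : (Fin n → Fin 2) → ℕ) :
    (∑ u : (Fin n → Fin 2) → ZMod 2, if c u then pU p u y else 0)
      ≤ (Fintype.card ((Fin n → Fin 2) → ZMod 2) : ℝ) * Qf p y := by
  calc (∑ u : (Fin n → Fin 2) → ZMod 2, if c u then pU p u y else 0)
      ≤ ∑ _u : (Fin n → Fin 2) → ZMod 2, Qf p y := by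
        refine Finset.sum_le_sum fun u _ => ?_
        split
        · exact pU_le_Qf hp u y
        · exact Qf_nonneg hp y
    _ = (Fintype.card ((Fin n → Fin 2) → ZMod 2) : ℝ) * Qf p y := by
        rw [Finset.sum_const, Finset.card_univ, nsmul_eq_mul]

lemma summable_sum_ite (hp : ∀ x y, 0 ≤ p x y)
    (hsum : HasSum (fun z : ZMod 2 × ℕ => p z.1 z.2) 1)
    {c : ((Fin n → Fin 2) → ℕ) → ((Fin n → Fin 2) → ZMod 2) → Prop}
    [inst : ∀ y u, Decidable (c y u)] :
    Summable fun y : (Fin n → Fin 2) → ℕ =>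
      ∑ u : (Fin n → Fin 2) → ZMod 2, if c y u then pU p u y else 0 := by
  apply Summable.of_nonneg_of_le
    (fun y => Finset.sum_nonneg fun u _ => ite_pU_nonneg hp u y)
    (fun y => sum_ite_le_card_Qf hp y)
  exact (summable_Qf hp hsum).mul_left _

lemma summable_const_mul_Qf_fst (hp : ∀ x y, 0 ≤ p x y)
    (hsum : HasSum (fun z : ZMod 2 × ℕ => p z.1 z.2) 1)
    {β : Type*} [Fintype β] (C : ℝ) :
    Summable fun w : ((Fin n → Fin 2) → ℕ) × β => C * Qf p w.1 := by
  have h1 : Summable fun w : ((Fin n → Fin 2) → ℕ) × β => Qf p w.1 * (1 : ℝ) := by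
    apply Summable.mul_of_nonneg (summable_Qf hp hsum)
      (Summable.of_finite (f := fun _ : β => (1:ℝ)))
      (fun y => Qf_nonneg hp y) (fun _ => zero_le_one)
  have h2 := h1.mul_left C
  simpa using h2

lemma sqrt_mul_le_half_add {a b : ℝ} (ha : 0 ≤ a) (hb : 0 ≤ b) :
    Real.sqrt (a * b) ≤ (a + b) / 2 := by
  rw [show (a + b) / 2 = Real.sqrt (((a + b) / 2) ^ 2) from (Real.sqrt_sq (by positivity)).symm]
  apply Real.sqrt_le_sqrt
  nlinarith [sq_nonneg (a - b)]

lemma ite_le_sqrt {a b : ℝ} (ha : 0 ≤ a) (hb : 0 ≤ b) {c : Prop} [Decidable c]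
    (h : c → a ≤ b) : (if c then a else 0) ≤ Real.sqrt (a * b) := by
  split_ifs with hc
  · calc a = Real.sqrt (a * a) := (Real.sqrt_mul_self ha).symm
      _ ≤ Real.sqrt (a * b) := Real.sqrt_le_sqrt (by nlinarith [h hc])
  · exact Real.sqrt_nonneg _

end aux2

/-- `Pr(U_i = a, U^{i-1} = w, Y^N = y)` with the prefix given on the subtype. -/
noncomputable def Pa {n : ℕ} (p : ZMod 2 → ℕ → ℝ) (i : Fin n → Fin 2)
    (y : (Fin n → Fin 2) → ℕ) (w : {j : Fin n → Fin 2 // ord j < ord i} → ZMod 2)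
    (a : ZMod 2) : ℝ :=
  ∑ u : (Fin n → Fin 2) → ZMod 2,
    if u i = a ∧ ∀ j : {j // ord j < ord i}, u j.1 = w j then pU p u y else 0

section aux3
variable {n : ℕ} {p : ZMod 2 → ℕ → ℝ}

lemma Zi_eq (i : Fin n → Fin 2) :
    Zi p i = 2 * ∑' w : ((Fin n → Fin 2) → ℕ) × ({j : Fin n → Fin 2 // ord j < ord i} → ZMod 2),
      Real.sqrt (Pa p i w.1 w.2 0 * Pa p i w.1 w.2 1) := rfl

lemma Pa_nonneg (hp : ∀ x y, 0 ≤ p x y) (i : Fin n → Fin 2) (y w a) :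
    0 ≤ Pa p i y w a :=
  Finset.sum_nonneg fun u _ => ite_pU_nonneg hp u y

lemma Pa_le (hp : ∀ x y, 0 ≤ p x y) (i : Fin n → Fin 2) (y w a) :
    Pa p i y w a ≤ (Fintype.card ((Fin n → Fin 2) → ZMod 2) : ℝ) * Qf p y :=
  sum_ite_le_card_Qf hp y

lemma jointRestr_eq_Pa (y : (Fin n → Fin 2) → ℕ) (i : Fin n → Fin 2)
    (v : (Fin n → Fin 2) → ZMod 2) (a : ZMod 2) :
    jointRestr p y i v a = Pa p i y (fun j => v j.1) a := by
  unfold jointRestr Pa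
  refine Finset.sum_congr rfl fun u _ => ?_
  refine if_congr (and_congr_right fun _ => ?_) rfl rfl
  exact ⟨fun h j => h j.1 j.2, fun h j hj => h ⟨j, hj⟩⟩

lemma jointRestr_congr (y : (Fin n → Fin 2) → ℕ) (i : Fin n → Fin 2)
    {v v' : (Fin n → Fin 2) → ZMod 2} (hvv : ∀ j, ord j < ord i → v j = v' j) (a : ZMod 2) :
    jointRestr p y i v a = jointRestr p y i v' a := by
  unfold jointRestr
  refine Finset.sum_congr rfl fun u _ => ?_
  refine if_congr (and_congr_right fun _ => ?_) rfl rfl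
  exact ⟨fun h j hj => (h j hj).trans (hvv j hj), fun h j hj => (h j hj).trans (hvv j hj).symm⟩

end aux3

section decoder
variable {n : ℕ} {p : ZMod 2 → ℕ → ℝ}

lemma dec_mem (E : Finset (Fin n → Fin 2)) (y u) {i : Fin n → Fin 2} (hi : i ∈ E) :
    dec p E y u i = u i := by
  rw [dec]; simp [hi]

lemma firstError (E : Finset (Fin n → Fin 2)) (y u) (h : dec p E y u ≠ u) :
    ∃ i ∈ Finset.univ \ E,
      dec p E y u i ≠ u i ∧ ∀ j, ord j < ord i → dec p E y u j = u j := by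
  classical
  have hne : (Finset.univ.filter fun i => dec p E y u i ≠ u i).Nonempty := by
    obtain ⟨i, hi⟩ := Function.ne_iff.1 h
    exact ⟨i, by simp [hi]⟩
  obtain ⟨i, hiD, hmin⟩ := Finset.exists_min_image _ ord hne
  simp only [Finset.mem_filter, Finset.mem_univ, true_and] at hiD
  have hiE : i ∉ E := fun hE => hiD (dec_mem E y u hE)
  refine ⟨i, by simp [hiE], hiD, fun j hj => ?_⟩
  by_contra hne2
  have h2 : ord i ≤ ord j := hmin j (by simp [hne2])
  omega

lemma ZMod.two_cases : ∀ a : ZMod 2, a = 0 ∨ a = 1 := by decide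

lemma dec_wrong (E : Finset (Fin n → Fin 2)) (y u) {i : Fin n → Fin 2} (hiE : i ∉ E)
    (hne : dec p E y u i ≠ u i) (hpre : ∀ j, ord j < ord i → dec p E y u j = u j) :
    Pa p i y (fun j => u j.1) (u i) ≤ Pa p i y (fun j => u j.1) (u i + 1) := by
  have hd : dec p E y u i =
      (if jointRestr p y i (fun j => if _h : ord j < ord i then dec p E y u j else 0) 1 ≤
          jointRestr p y i (fun j => if _h : ord j < ord i then dec p E y u j else 0) 0
       then 0 else 1) := by
    rw [dec]; simp [hiE]
  have hcong : ∀ a : ZMod 2,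
      jointRestr p y i (fun j => if _h : ord j < ord i then dec p E y u j else 0) a
        = Pa p i y (fun j => u j.1) a := by
    intro a
    rw [jointRestr_congr y i (v' := u) (fun j hj => by rw [dif_pos hj]; exact hpre j hj) a,
      jointRestr_eq_Pa]
  rw [hcong 0, hcong 1] at hd
  rcases ZMod.two_cases (u i) with h0 | h1
  · rw [h0] at hne ⊢
    rw [show (0 : ZMod 2) + 1 = 1 by decide]
    by_cases hc : Pa p i y (fun j => u j.1) 1 ≤ Pa p i y (fun j => u j.1) 0
    · rw [if_pos hc] at hd; exact absurd hd hne
    · exact le_of_not_ge hc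
  · rw [h1] at hne ⊢
    rw [show (1 : ZMod 2) + 1 = 0 by decide]
    by_cases hc : Pa p i y (fun j => u j.1) 1 ≤ Pa p i y (fun j => u j.1) 0
    · exact hc
    · rw [if_neg hc] at hd; exact absurd hd hne

end decoder

section group
variable {n : ℕ} {p : ZMod 2 → ℕ → ℝ}

lemma sum_cond_eq (hp : ∀ x y, 0 ≤ p x y) (i : Fin n → Fin 2) (y : (Fin n → Fin 2) → ℕ) :
    (∑ u : (Fin n → Fin 2) → ZMod 2,
        if Pa p i y (fun j => u j.1) (u i) ≤ Pa p i y (fun j => u j.1) (u i + 1)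
        then pU p u y else 0)
      = ∑ x : ({j : Fin n → Fin 2 // ord j < ord i} → ZMod 2) × ZMod 2,
          if Pa p i y x.1 x.2 ≤ Pa p i y x.1 (x.2 + 1) then Pa p i y x.1 x.2 else 0 := by
  classical
  have key : ∀ u : (Fin n → Fin 2) → ZMod 2,
      (if Pa p i y (fun j => u j.1) (u i) ≤ Pa p i y (fun j => u j.1) (u i + 1)
       then pU p u y else 0)
      = ∑ x : ({j : Fin n → Fin 2 // ord j < ord i} → ZMod 2) × ZMod 2,
          if x = ((fun j => u j.1), u i)
          then (if Pa p i y x.1 x.2 ≤ Pa p i y x.1 (x.2 + 1) then pU p u y else 0)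
          else 0 := by
    intro u
    rw [Finset.sum_ite_eq' Finset.univ (((fun j => u j.1), u i) :
        ({j : Fin n → Fin 2 // ord j < ord i} → ZMod 2) × ZMod 2)
      (fun x => if Pa p i y x.1 x.2 ≤ Pa p i y x.1 (x.2 + 1) then pU p u y else 0)]
    simp
  rw [Finset.sum_congr rfl fun u _ => key u, Finset.sum_comm]
  refine Finset.sum_congr rfl fun x _ => ?_
  by_cases hc : Pa p i y x.1 x.2 ≤ Pa p i y x.1 (x.2 + 1)
  · rw [if_pos hc]
    simp only [if_pos hc]
    unfold Pa
    refine Finset.sum_congr rfl fun u _ => ?_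
    refine if_congr ⟨fun h => ?_, fun h => ?_⟩ rfl rfl
    · subst h; exact ⟨rfl, fun j => rfl⟩
    · exact Prod.ext (funext fun j => (h.2 j).symm) h.1.symm
  · rw [if_neg hc]
    apply Finset.sum_eq_zero
    intro u _
    rw [if_neg hc]
    simp

lemma group_le (hp : ∀ x y, 0 ≤ p x y) (E : Finset (Fin n → Fin 2))
    {i : Fin n → Fin 2} (hiE : i ∉ E) (y : (Fin n → Fin 2) → ℕ) :
    (∑ u : (Fin n → Fin 2) → ZMod 2,
        if dec p E y u i ≠ u i ∧ (∀ j, ord j < ord i → dec p E y u j = u j)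
        then pU p u y else 0)
      ≤ ∑ w : {j : Fin n → Fin 2 // ord j < ord i} → ZMod 2,
          2 * Real.sqrt (Pa p i y w 0 * Pa p i y w 1) := by
  classical
  calc (∑ u : (Fin n → Fin 2) → ZMod 2,
        if dec p E y u i ≠ u i ∧ (∀ j, ord j < ord i → dec p E y u j = u j)
        then pU p u y else 0)
      ≤ ∑ u : (Fin n → Fin 2) → ZMod 2,
        if Pa p i y (fun j => u j.1) (u i) ≤ Pa p i y (fun j => u j.1) (u i + 1)
        then pU p u y else 0 := by
        refine Finset.sum_le_sum fun u _ => ?_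
        split_ifs with h1 h2
        · exact le_refl _
        · exact absurd (dec_wrong E y u hiE h1.1 h1.2) h2
        · exact pU_nonneg hp u y
        · exact le_refl 0
    _ = ∑ x : ({j : Fin n → Fin 2 // ord j < ord i} → ZMod 2) × ZMod 2,
          if Pa p i y x.1 x.2 ≤ Pa p i y x.1 (x.2 + 1) then Pa p i y x.1 x.2 else 0 :=
        sum_cond_eq hp i y
    _ = ∑ w : {j : Fin n → Fin 2 // ord j < ord i} → ZMod 2, ∑ a : ZMod 2,
          (if Pa p i y w a ≤ Pa p i y w (a + 1) then Pa p i y w a else 0) := by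
        rw [Fintype.sum_prod_type]
    _ ≤ ∑ w : {j : Fin n → Fin 2 // ord j < ord i} → ZMod 2,
          2 * Real.sqrt (Pa p i y w 0 * Pa p i y w 1) := by
        refine Finset.sum_le_sum fun w _ => ?_
        rw [show (Finset.univ : Finset (ZMod 2)) = {0, 1} by decide,
          Finset.sum_insert (by decide), Finset.sum_singleton]
        have h0 : (if Pa p i y w 0 ≤ Pa p i y w (0 + 1) then Pa p i y w 0 else 0)
            ≤ Real.sqrt (Pa p i y w 0 * Pa p i y w 1) := by
          rw [show (0 : ZMod 2) + 1 = 1 by decide]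
          exact ite_le_sqrt (Pa_nonneg hp i y w 0) (Pa_nonneg hp i y w 1) fun h => h
        have h1 : (if Pa p i y w 1 ≤ Pa p i y w (1 + 1) then Pa p i y w 1 else 0)
            ≤ Real.sqrt (Pa p i y w 0 * Pa p i y w 1) := by
          rw [show (1 : ZMod 2) + 1 = 0 by decide, mul_comm]
          exact ite_le_sqrt (Pa_nonneg hp i y w 1) (Pa_nonneg hp i y w 0) fun h => h
        linarith

end group

section main
variable {n : ℕ} {p : ZMod 2 → ℕ → ℝ}

lemma per_i (hp : ∀ x y, 0 ≤ p x y)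
    (hsum : HasSum (fun z : ZMod 2 × ℕ => p z.1 z.2) 1)
    (E : Finset (Fin n → Fin 2)) {i : Fin n → Fin 2} (hiE : i ∉ E) :
    (∑' y : (Fin n → Fin 2) → ℕ, ∑ u : (Fin n → Fin 2) → ZMod 2,
        if dec p E y u i ≠ u i ∧ (∀ j, ord j < ord i → dec p E y u j = u j)
        then pU p u y else 0)
      ≤ Zi p i := by
  classical
  set C : ℝ := (Fintype.card ((Fin n → Fin 2) → ZMod 2) : ℝ) with hC
  have hsq : Summable fun w : ((Fin n → Fin 2) → ℕ) ×
      ({j : Fin n → Fin 2 // ord j < ord i} → ZMod 2) =>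
        Real.sqrt (Pa p i w.1 w.2 0 * Pa p i w.1 w.2 1) := by
    apply Summable.of_nonneg_of_le (fun w => Real.sqrt_nonneg _) ?_
      (summable_const_mul_Qf_fst hp hsum C)
    intro w
    have h0 := Pa_le hp i w.1 w.2 0
    have h1 := Pa_le hp i w.1 w.2 1
    calc Real.sqrt (Pa p i w.1 w.2 0 * Pa p i w.1 w.2 1)
        ≤ (Pa p i w.1 w.2 0 + Pa p i w.1 w.2 1) / 2 :=
          sqrt_mul_le_half_add (Pa_nonneg hp i w.1 w.2 0) (Pa_nonneg hp i w.1 w.2 1)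
      _ ≤ C * Qf p w.1 := by linarith
  have hsq2 := hsq.mul_left 2
  have hslice := (summable_prod_of_nonneg
    (f := fun w : ((Fin n → Fin 2) → ℕ) ×
      ({j : Fin n → Fin 2 // ord j < ord i} → ZMod 2) =>
        2 * Real.sqrt (Pa p i w.1 w.2 0 * Pa p i w.1 w.2 1))
    (fun w => by positivity)).1 hsq2
  have hRHSsummable : Summable fun y : (Fin n → Fin 2) → ℕ =>
      ∑ w : {j : Fin n → Fin 2 // ord j < ord i} → ZMod 2,
        2 * Real.sqrt (Pa p i y w 0 * Pa p i y w 1) := by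
    have := hslice.2
    simpa [tsum_fintype] using this
  calc (∑' y : (Fin n → Fin 2) → ℕ, ∑ u : (Fin n → Fin 2) → ZMod 2,
        if dec p E y u i ≠ u i ∧ (∀ j, ord j < ord i → dec p E y u j = u j)
        then pU p u y else 0)
      ≤ ∑' y : (Fin n → Fin 2) → ℕ,
          ∑ w : {j : Fin n → Fin 2 // ord j < ord i} → ZMod 2,
            2 * Real.sqrt (Pa p i y w 0 * Pa p i y w 1) :=
        Summable.tsum_le_tsum (fun y => group_le hp E hiE y) (summable_sum_ite hp hsum) hRHSsummable
    _ = ∑' y : (Fin n → Fin 2) → ℕ, ∑' w : {j : Fin n → Fin 2 // ord j < ord i} → ZMod 2,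
            2 * Real.sqrt (Pa p i y w 0 * Pa p i y w 1) := by
        refine tsum_congr fun y => ?_
        rw [tsum_fintype]
    _ = ∑' w : ((Fin n → Fin 2) → ℕ) × ({j : Fin n → Fin 2 // ord j < ord i} → ZMod 2),
            2 * Real.sqrt (Pa p i w.1 w.2 0 * Pa p i w.1 w.2 1) :=
        (Summable.tsum_prod' hsq2 (fun y => Summable.of_finite)).symm
    _ = Zi p i := by rw [Zi_eq, ← tsum_mul_left]

theorem stmt14' (hp : ∀ x y, 0 ≤ p x y)
    (hsum : HasSum (fun z : ZMod 2 × ℕ => p z.1 z.2) 1)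
    (E : Finset (Fin n → Fin 2)) :
    (∑' y : (Fin n → Fin 2) → ℕ, ∑ u : (Fin n → Fin 2) → ZMod 2,
        if dec p E y u ≠ u then pU p u y else 0) ≤
      ∑ i ∈ Finset.univ \ E, Zi p i := by
  classical
  have hFsum : ∀ i : Fin n → Fin 2, Summable fun y : (Fin n → Fin 2) → ℕ =>
      ∑ u : (Fin n → Fin 2) → ZMod 2,
        if dec p E y u i ≠ u i ∧ (∀ j, ord j < ord i → dec p E y u j = u j)
        then pU p u y else 0 := fun i => summable_sum_ite hp hsum
  have hfsum : Summable fun y : (Fin n → Fin 2) → ℕ =>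
      ∑ u : (Fin n → Fin 2) → ZMod 2, if dec p E y u ≠ u then pU p u y else 0 :=
    summable_sum_ite hp hsum
  have hpoint : ∀ y : (Fin n → Fin 2) → ℕ,
      (∑ u : (Fin n → Fin 2) → ZMod 2, if dec p E y u ≠ u then pU p u y else 0)
        ≤ ∑ i ∈ Finset.univ \ E, ∑ u : (Fin n → Fin 2) → ZMod 2,
            if dec p E y u i ≠ u i ∧ (∀ j, ord j < ord i → dec p E y u j = u j)
            then pU p u y else 0 := by
    intro y
    rw [Finset.sum_comm]
    refine Finset.sum_le_sum fun u _ => ?_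
    split_ifs with h
    · obtain ⟨i, hi, hFE⟩ := firstError E y u h
      calc pU p u y
          = if dec p E y u i ≠ u i ∧ (∀ j, ord j < ord i → dec p E y u j = u j)
            then pU p u y else 0 := (if_pos ⟨hFE.1, hFE.2⟩).symm
        _ ≤ _ := Finset.single_le_sum (f := fun i =>
            if dec p E y u i ≠ u i ∧ (∀ j, ord j < ord i → dec p E y u j = u j)
            then pU p u y else 0) (fun j _ => ite_pU_nonneg hp u y) hi
    · exact Finset.sum_nonneg fun i _ => ite_pU_nonneg hp u y
  calc (∑' y : (Fin n → Fin 2) → ℕ, ∑ u : (Fin n → Fin 2) → ZMod 2,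
        if dec p E y u ≠ u then pU p u y else 0)
      ≤ ∑' y : (Fin n → Fin 2) → ℕ, ∑ i ∈ Finset.univ \ E,
          ∑ u : (Fin n → Fin 2) → ZMod 2,
            if dec p E y u i ≠ u i ∧ (∀ j, ord j < ord i → dec p E y u j = u j)
            then pU p u y else 0 :=
        Summable.tsum_le_tsum hpoint hfsum (summable_sum fun i _ => hFsum i)
    _ = ∑ i ∈ Finset.univ \ E, ∑' y : (Fin n → Fin 2) → ℕ,
          ∑ u : (Fin n → Fin 2) → ZMod 2,
            if dec p E y u i ≠ u i ∧ (∀ j, ord j < ord i → dec p E y u j = u j)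
            then pU p u y else 0 := Summable.tsum_finsetSum fun i _ => hFsum i
    _ ≤ ∑ i ∈ Finset.univ \ E, Zi p i := by
        refine Finset.sum_le_sum fun i hi => ?_
        exact per_i hp hsum E (Finset.mem_sdiff.1 hi).2

end main

/-- Union bound on the block error probability of successive-cancellation
decoding: `Pr(Û^N ≠ U^N) ≤ Σ_{i ∉ E} Z(U_i | Y^N, U^{i-1})`. -/
theorem stmt14 (n : ℕ) (p : ZMod 2 → ℕ → ℝ) (hp : ∀ x y, 0 ≤ p x y)
    (hsum : HasSum (fun z : ZMod 2 × ℕ => p z.1 z.2) 1)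
    (E : Finset (Fin n → Fin 2)) :
    (∑' y : (Fin n → Fin 2) → ℕ, ∑ u : (Fin n → Fin 2) → ZMod 2,
        if dec p E y u ≠ u then pU p u y else 0) ≤
      ∑ i ∈ Finset.univ \ E, Zi p i :=
  stmt14' hp hsum E
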